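/- Let (W,S) be any Coxeter system. If w ∈ W is fully commutative and w = u·v with ℓ(w) = ℓ(u) + ℓ(v) (where ℓ denotes Coxeter length), then both u and v are fully commutative. -/

import Mathlib

/-! ### Generalities: commutation moves and fully commutative elements -/

/-- A single commutation move on words in the alphabet `B`: swap two adjacent
letters `s`, `t` with `M s t = 2`. -/
def CommMove {B : Type*} (M : CoxeterMatrix B) (w₁ w₂ : List B) : Prop :=
  ∃ (u v : List B) (s t : B), M s t = 2 ∧ w₁ = u ++ s :: t :: v ∧ w₂ = u ++ t :: s :: v

/-- Two words are commutation equivalent if they are related by a (possibly empty)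
sequence of commutation moves. -/
def CommEquiv {B : Type*} (M : CoxeterMatrix B) : List B → List B → Prop :=
  Relation.ReflTransGen (CommMove M)

/-- An element of a Coxeter group is *fully commutative* if any two of its reduced
words are related by a sequence of commutation moves. -/
def IsFC {B W : Type*} [Group W] {M : CoxeterMatrix B} (cs : CoxeterSystem M W) (w : W) : Prop :=
  ∀ u v : List B, cs.IsReduced u → cs.IsReduced v →
    cs.wordProd u = w → cs.wordProd v = w → CommEquiv M u v

/-! ### The Coxeter matrix of affine type D̃_{n+2} -/

/-- Half of the adjacency relation in the Coxeter graph of affine type `D̃_{n+2}`. -/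
def DtildeAdjHalf (n i j : ℕ) : Prop :=
  (i = 0 ∧ j = 2) ∨ (i = 1 ∧ j = 2) ∨ (2 ≤ i ∧ i < n ∧ j = i + 1) ∨
  (i = n ∧ (j = n + 1 ∨ j = n + 2))

/-- Adjacency in the Coxeter graph of affine type `D̃_{n+2}`, with vertices `0, …, n+2`:
the edges are `{0,2}`, `{1,2}`, `{i,i+1}` for `2 ≤ i ≤ n-1`, `{n,n+1}` and `{n,n+2}`. -/
def DtildeAdj (n i j : ℕ) : Prop := DtildeAdjHalf n i j ∨ DtildeAdjHalf n j i

instance (n i j : ℕ) : Decidable (DtildeAdjHalf n i j) := by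
  unfold DtildeAdjHalf; infer_instance

instance (n i j : ℕ) : Decidable (DtildeAdj n i j) := by unfold DtildeAdj; infer_instance

private lemma dtildeAdj_symm {n i j : ℕ} : DtildeAdj n i j ↔ DtildeAdj n j i := or_comm

/-- The Coxeter matrix of affine type `D̃_{n+2}`: `m i i = 1`, `m i j = 3` if `i`, `j` are
adjacent in the Coxeter graph, and `m i j = 2` otherwise. -/
def DtildeMatrix (n : ℕ) : CoxeterMatrix (Fin (n + 3)) where
  M i j := if i = j then 1 else if DtildeAdj n i.val j.val then 3 else 2
  isSymm := by
    refine Matrix.IsSymm.ext fun j i => ?_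
    show (if i = j then 1 else if DtildeAdj n i.val j.val then 3 else 2) =
      (if j = i then 1 else if DtildeAdj n j.val i.val then 3 else 2)
    by_cases h : i = j
    · simp [h]
    · have h' : (j : Fin (n+3)) ≠ i := Ne.symm h
      rw [if_neg h', if_neg h]
      by_cases ha : DtildeAdj n i.val j.val
      · rw [if_pos ha, if_pos (dtildeAdj_symm.mp ha)]
      · rw [if_neg ha, if_neg (fun hb => ha (dtildeAdj_symm.mp hb))]
  diagonal := fun i => by simp
  off_diagonal := fun i j hij => by
    rw [if_neg hij]
    split <;> simp

/-! ### The generalized Temperley–Lieb algebra TL(D̃_{n+2}) -/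

/-- The base ring `ℤ[δ]`. -/
abbrev Rδ : Type := Polynomial ℤ

/-- The element `δ ∈ ℤ[δ]`. -/
noncomputable def δpoly : Rδ := Polynomial.X

/-- The defining relations of the generalized Temperley–Lieb algebra of type `D̃_{n+2}`:
(d1) `bᵢ² = δ bᵢ`; (d2) `bᵢ bⱼ = bⱼ bᵢ` if `m(sᵢ,sⱼ) = 2`;
(d3) `bᵢ bⱼ bᵢ = bᵢ` if `m(sᵢ,sⱼ) = 3`. -/
inductive TLRel (n : ℕ) : FreeAlgebra Rδ (Fin (n + 3)) → FreeAlgebra Rδ (Fin (n + 3)) → Prop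
  | sq (i : Fin (n + 3)) :
      TLRel n (FreeAlgebra.ι Rδ i * FreeAlgebra.ι Rδ i) (δpoly • FreeAlgebra.ι Rδ i)
  | comm (i j : Fin (n + 3)) (h : DtildeMatrix n i j = 2) :
      TLRel n (FreeAlgebra.ι Rδ i * FreeAlgebra.ι Rδ j) (FreeAlgebra.ι Rδ j * FreeAlgebra.ι Rδ i)
  | braid (i j : Fin (n + 3)) (h : DtildeMatrix n i j = 3) :
      TLRel n (FreeAlgebra.ι Rδ i * FreeAlgebra.ι Rδ j * FreeAlgebra.ι Rδ i) (FreeAlgebra.ι Rδ i)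

/-- The generalized Temperley–Lieb algebra `TL(D̃_{n+2})` as a `ℤ[δ]`-algebra, presented by
generators `b₀, …, b_{n+2}` and the relations (d1)–(d3). -/
abbrev TL (n : ℕ) : Type := RingQuot (TLRel n)

/-- The generator `bᵢ` of `TL(D̃_{n+2})`. -/
noncomputable def bGen (n : ℕ) (i : Fin (n + 3)) : TL n :=
  RingQuot.mkAlgHom Rδ (TLRel n) (FreeAlgebra.ι Rδ i)

/-- The monomial `b_{i₁} b_{i₂} ⋯ b_{i_k}` of `TL(D̃_{n+2})` associated to a word. -/
noncomputable def bWord (n : ℕ) (l : List (Fin (n + 3))) : TL n := (l.map (bGen n)).prod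

/-- The monomial `b_w ∈ TL(D̃_{n+2})` associated to a group element `w`, computed from a
chosen reduced word for `w` (independent of the choice when `w` is fully commutative). -/
noncomputable def bElt {n : ℕ} {W : Type*} [Group W] (cs : CoxeterSystem (DtildeMatrix n) W)
    (w : W) : TL n :=
  bWord n (Classical.choose (cs.exists_reduced_word' w))

section Aux
variable {B : Type*} {M : CoxeterMatrix B}

lemma commMove_symm {a b : List B} (h : CommMove M a b) : CommMove M b a := by
  obtain ⟨u, v, s, t, h2, ha, hb⟩ := h
  exact ⟨u, v, t, s, by rw [← M.symmetric s t]; exact h2, hb, ha⟩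

lemma commEquiv_symm {a b : List B} (h : CommEquiv M a b) : CommEquiv M b a := by
  induction h with
  | refl => exact Relation.ReflTransGen.refl
  | tail _ h ih => exact Relation.ReflTransGen.head (commMove_symm h) ih

lemma commMove_cons (t : B) {a b : List B} (h : CommMove M a b) : CommMove M (t :: a) (t :: b) := by
  obtain ⟨u, v, s, s', h2, ha, hb⟩ := h
  exact ⟨t :: u, v, s, s', h2, by simp [ha], by simp [hb]⟩

lemma commEquiv_cons (t : B) {a b : List B} (h : CommEquiv M a b) :
    CommEquiv M (t :: a) (t :: b) := by
  induction h with
  | refl => exact Relation.ReflTransGen.refl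
  | tail _ h ih => exact Relation.ReflTransGen.tail ih (commMove_cons t h)

lemma commMove_reverse {a b : List B} (h : CommMove M a b) :
    CommMove M a.reverse b.reverse := by
  obtain ⟨u, v, s, t, h2, ha, hb⟩ := h
  refine ⟨v.reverse, u.reverse, t, s, by rw [← M.symmetric s t]; exact h2, ?_, ?_⟩ <;>
    simp [ha, hb]

lemma commEquiv_reverse {a b : List B} (h : CommEquiv M a b) :
    CommEquiv M a.reverse b.reverse := by
  induction h with
  | refl => exact Relation.ReflTransGen.refl
  | tail _ h ih => exact Relation.ReflTransGen.tail ih (commMove_reverse h)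

/-- Deletion of a leading-up-to-commutation occurrence of `s`. -/
inductive Del (M : CoxeterMatrix B) (s : B) : List B → List B → Prop
  | head (q : List B) : Del M s (s :: q) q
  | cons (t : B) {x y : List B} (h : M s t = 2) : Del M s x y → Del M s (t :: x) (t :: y)

lemma del_move {s : B} {x y x' : List B} (hd : Del M s x y) (hm : CommMove M x x') :
    ∃ y', Del M s x' y' ∧ CommEquiv M y y' := by
  induction hd generalizing x' with
  | head q =>
    obtain ⟨u, v, c, d, h2, hx, hx'⟩ := hm
    cases u with
    | nil =>
      simp only [List.nil_append, List.cons.injEq] at hx hx'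
      obtain ⟨rfl, rfl⟩ := hx
      subst hx'
      exact ⟨d :: v, Del.cons d h2 (Del.head v), Relation.ReflTransGen.refl⟩
    | cons t u' =>
      simp only [List.cons_append, List.cons.injEq] at hx hx'
      obtain ⟨rfl, rfl⟩ := hx
      subst hx'
      exact ⟨u' ++ d :: c :: v, Del.head _,
        Relation.ReflTransGen.single ⟨u', v, c, d, h2, rfl, rfl⟩⟩
  | @cons t x y ht hd ih =>
    obtain ⟨u, v, c, d, h2, hx, hx'⟩ := hm
    cases u with
    | nil =>
      simp only [List.nil_append, List.cons.injEq] at hx hx'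
      obtain ⟨rfl, rfl⟩ := hx
      subst hx'
      cases hd with
      | head q =>
        exact ⟨_, Del.head _, Relation.ReflTransGen.refl⟩
      | cons d' hd' hdd =>
        rename_i y₀
        exact ⟨d :: t :: y₀, Del.cons d hd' (Del.cons t ht hdd),
          Relation.ReflTransGen.single ⟨[], y₀, t, d, h2, rfl, rfl⟩⟩
    | cons t' u' =>
      simp only [List.cons_append, List.cons.injEq] at hx hx'
      obtain ⟨rfl, rfl⟩ := hx
      subst hx'
      obtain ⟨y', hdy', hey'⟩ := ih ⟨u', v, c, d, h2, rfl, rfl⟩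
      exact ⟨t :: y', Del.cons t ht hdy', commEquiv_cons t hey'⟩

lemma del_equiv {s : B} {x y z : List B} (he : CommEquiv M x z) (hd : Del M s x y) :
    ∃ y', Del M s z y' ∧ CommEquiv M y y' := by
  induction he with
  | refl => exact ⟨y, hd, Relation.ReflTransGen.refl⟩
  | tail _ h ih =>
    obtain ⟨y', hd', he'⟩ := ih
    obtain ⟨y'', hd'', he''⟩ := del_move hd' h
    exact ⟨y'', hd'', he'.trans he''⟩

lemma commEquiv_cancel_head {s : B} {a b : List B} (h : CommEquiv M (s :: a) (s :: b)) :
    CommEquiv M a b := by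
  obtain ⟨y', hd, he⟩ := del_equiv h (Del.head a)
  cases hd with
  | head => exact he
  | cons t h2 _ =>
    rw [M.diagonal s] at h2
    omega

lemma commEquiv_cancel_left (c : List B) {a b : List B} (h : CommEquiv M (c ++ a) (c ++ b)) :
    CommEquiv M a b := by
  induction c with
  | nil => exact h
  | cons t c ih => exact ih (commEquiv_cancel_head h)

lemma commEquiv_cancel_right (c : List B) {a b : List B} (h : CommEquiv M (a ++ c) (b ++ c)) :
    CommEquiv M a b := by
  have := commEquiv_reverse h
  simp only [List.reverse_append] at this
  have := commEquiv_cancel_left c.reverse this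
  simpa using commEquiv_reverse this

end Aux

/-- In any Coxeter system, if `w` is fully commutative and `w = u * v`
with `ℓ(w) = ℓ(u) + ℓ(v)`, then `u` and `v` are fully commutative. -/
theorem isFC_of_mul_of_length_add {B W : Type*} [Group W] {M : CoxeterMatrix B}
    (cs : CoxeterSystem M W) (w u v : W) (hw : IsFC cs w) (huv : w = u * v)
    (hlen : cs.length w = cs.length u + cs.length v) :
    IsFC cs u ∧ IsFC cs v := by
  obtain ⟨u₀, hu₀r, hu₀⟩ := cs.exists_reduced_word' u
  obtain ⟨v₀, hv₀r, hv₀⟩ := cs.exists_reduced_word' v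
  have key : ∀ a b : List B, cs.wordProd a = u → cs.wordProd b = v →
      a.length = cs.length u → b.length = cs.length v → cs.IsReduced (a ++ b) ∧
      cs.wordProd (a ++ b) = w := by
    intro a b ha hb hla hlb
    have hp : cs.wordProd (a ++ b) = w := by rw [cs.wordProd_append, ha, hb, huv]
    refine ⟨?_, hp⟩
    unfold CoxeterSystem.IsReduced
    rw [hp, List.length_append, hla, hlb, hlen]
  constructor
  · intro u₁ u₂ h₁ h₂ hp₁ hp₂
    have hl₁ : u₁.length = cs.length u := by rw [← hp₁]; exact h₁.symm
    have hl₂ : u₂.length = cs.length u := by rw [← hp₂]; exact h₂.symm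
    have hlb : v₀.length = cs.length v := by rw [hv₀]; exact hv₀r.symm
    obtain ⟨hr₁, hw₁⟩ := key u₁ v₀ hp₁ hv₀.symm hl₁ hlb
    obtain ⟨hr₂, hw₂⟩ := key u₂ v₀ hp₂ hv₀.symm hl₂ hlb
    exact commEquiv_cancel_right v₀ (hw (u₁ ++ v₀) (u₂ ++ v₀) hr₁ hr₂ hw₁ hw₂)
  · intro v₁ v₂ h₁ h₂ hp₁ hp₂
    have hl₁ : v₁.length = cs.length v := by rw [← hp₁]; exact h₁.symm
    have hl₂ : v₂.length = cs.length v := by rw [← hp₂]; exact h₂.symm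
    have hla : u₀.length = cs.length u := by rw [hu₀]; exact hu₀r.symm
    obtain ⟨hr₁, hw₁⟩ := key u₀ v₁ hu₀.symm hp₁ hla hl₁
    obtain ⟨hr₂, hw₂⟩ := key u₀ v₂ hu₀.symm hp₂ hla hl₂
    exact commEquiv_cancel_left u₀ (hw (u₀ ++ v₁) (u₀ ++ v₂) hr₁ hr₂ hw₁ hw₂)
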